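/- arXiv:math/0009187 — 2 statements merged into one kernel-verified Lean document; each statement's English description precedes it below -/
import Mathlib

section
/- Let Λ = O³ + Z·(1/λ, 1/λ, 1/λ) ⊂ K³ where K = Q(√−3), O = Z[ω], λ = √−3, and for integers j, k let Λ_{j,k} = {α ∈ O³ + k(1/λ,1/λ,1/λ) : α₀+α₁+α₂ ≡ j (mod λO)}. Then right multiplication by the unitary matrix M = (1/λ)[[1,1,1],[1,ω,ω²],[1,ω²,ω]] maps Λ_{j,k} onto Λ_{−k,j}, i.e. Λ_{j,k} M = Λ_{−k,j}. -/
noncomputable section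
open Complex

/-- `ω = exp(2πi/3)`. -/
def ω : ℂ := Complex.exp (2 * Real.pi * Complex.I / 3)

/-- `λ = ω - ω² = √-3`. -/
def lam : ℂ := ω - ω ^ 2

/-- `x` is an Eisenstein integer, i.e. `x ∈ 𝒪 = ℤ[ω]`. -/
def isO (x : ℂ) : Prop := ∃ m n : ℤ, x = (m : ℂ) + (n : ℂ) * ω

/-- `Λ_{j,k} = {α ∈ 𝒪³ + k(1/λ,1/λ,1/λ) : α₀+α₁+α₂ ≡ j (mod λ𝒪)}`. -/
def LamSet (j k : ℤ) : Set (Fin 3 → ℂ) :=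
  {α | (∀ i, isO (α i - k / lam)) ∧ isO ((α 0 + α 1 + α 2 - j) / lam)}

/-- The matrix `M = (1/λ)·[[1,1,1],[1,ω,ω²],[1,ω²,ω]]`. -/
def M : Matrix (Fin 3) (Fin 3) ℂ :=
  lam⁻¹ • !![1, 1, 1; 1, ω, ω ^ 2; 1, ω ^ 2, ω]

lemma hprim : IsPrimitiveRoot ω 3 := by
  have := Complex.isPrimitiveRoot_exp 3 (by norm_num)
  simpa [ω] using this
lemma hω3 : ω ^ 3 = 1 := hprim.pow_eq_one
lemma hωsum : ω ^ 2 + ω + 1 = 0 := by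
  have h : (ω - 1) * (ω ^ 2 + ω + 1) = 0 := by linear_combination hω3
  rcases mul_eq_zero.mp h with h' | h'
  · exact absurd (sub_eq_zero.mp h') (hprim.ne_one (by norm_num))
  · exact h'
lemma hlam2 : lam ^ 2 = -3 := by
  simp only [lam]; linear_combination (ω - 2) * hω3 + hωsum
lemma hlam0 : lam ≠ 0 := by
  intro h; have := hlam2; rw [h] at this; norm_num at this

lemma vecMul_M_0 (v : Fin 3 → ℂ) : Matrix.vecMul v M 0 = lam⁻¹ * (v 0 + v 1 + v 2) := by
  simp [Matrix.vecMul, dotProduct, M, Fin.sum_univ_three]; ring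
lemma vecMul_M_1 (v : Fin 3 → ℂ) :
    Matrix.vecMul v M 1 = lam⁻¹ * (v 0 + v 1 * ω + v 2 * ω ^ 2) := by
  simp [Matrix.vecMul, dotProduct, M, Fin.sum_univ_three]; ring
lemma vecMul_M_2 (v : Fin 3 → ℂ) :
    Matrix.vecMul v M 2 = lam⁻¹ * (v 0 + v 1 * ω ^ 2 + v 2 * ω) := by
  simp [Matrix.vecMul, dotProduct, M, Fin.sum_univ_three]; ring

lemma isO_add {x y : ℂ} (hx : isO x) (hy : isO y) : isO (x + y) := by
  obtain ⟨m, n, rfl⟩ := hx; obtain ⟨p, q, rfl⟩ := hy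
  exact ⟨m + p, n + q, by push_cast; ring⟩
lemma isO_neg {x : ℂ} (hx : isO x) : isO (-x) := by
  obtain ⟨m, n, rfl⟩ := hx; exact ⟨-m, -n, by push_cast; ring⟩
lemma isO_int (n : ℤ) : isO (n : ℂ) := ⟨n, 0, by push_cast; ring⟩
lemma isO_mul {x y : ℂ} (hx : isO x) (hy : isO y) : isO (x * y) := by
  obtain ⟨m, n, rfl⟩ := hx; obtain ⟨p, q, rfl⟩ := hy
  exact ⟨m * p - n * q, m * q + n * p - n * q, by push_cast; linear_combination (n * q : ℂ) * hωsum⟩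
lemma isO_ω : isO ω := ⟨0, 1, by push_cast; ring⟩
lemma isO_one_add_ω : isO (1 + ω) := ⟨1, 1, by push_cast; ring⟩

lemma key {j k : ℤ} {α : Fin 3 → ℂ} (h : α ∈ LamSet j k) :
    Matrix.vecMul α M ∈ LamSet (-k) j := by
  obtain ⟨h1, h2⟩ := h
  have a1 := h1 1
  have a2 := h1 2
  have c0 : isO (Matrix.vecMul α M 0 - (j : ℂ) / lam) := by
    have e : Matrix.vecMul α M 0 - (j : ℂ) / lam = (α 0 + α 1 + α 2 - j) / lam := by
      rw [vecMul_M_0, inv_mul_eq_div, div_sub_div_same]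
    rw [e]; exact h2
  have c1 : isO (Matrix.vecMul α M 1 - (j : ℂ) / lam) := by
    have e : Matrix.vecMul α M 1 - (j : ℂ) / lam =
        ((α 0 + α 1 + α 2 - j) / lam + k) + (α 1 - k / lam) * (1 + ω) + (α 2 - k / lam) * ω := by
      rw [vecMul_M_1]; have h0 : ω - ω ^ 2 ≠ 0 := by simpa [lam] using hlam0
      field_simp [hlam0]; simp only [lam]
      linear_combination ((α 1 + α 2) * (ω - 1) + (k : ℂ)) * hωsum
    rw [e]
    exact isO_add (isO_add (isO_add h2 (isO_int k)) (isO_mul a1 isO_one_add_ω)) (isO_mul a2 isO_ω)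
  have c2 : isO (Matrix.vecMul α M 2 - (j : ℂ) / lam) := by
    have e : Matrix.vecMul α M 2 - (j : ℂ) / lam =
        ((α 0 + α 1 + α 2 - j) / lam + k) + (α 1 - k / lam) * ω + (α 2 - k / lam) * (1 + ω) := by
      rw [vecMul_M_2]; have h0 : ω - ω ^ 2 ≠ 0 := by simpa [lam] using hlam0
      field_simp [hlam0]; simp only [lam]
      linear_combination ((α 1 + α 2) * (ω - 1) + (k : ℂ)) * hωsum
    rw [e]
    exact isO_add (isO_add (isO_add h2 (isO_int k)) (isO_mul a1 isO_ω)) (isO_mul a2 isO_one_add_ω)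
  have csum : isO ((Matrix.vecMul α M 0 + Matrix.vecMul α M 1 + Matrix.vecMul α M 2 - (-k : ℤ)) / lam) := by
    have e : (Matrix.vecMul α M 0 + Matrix.vecMul α M 1 + Matrix.vecMul α M 2 - ((-k : ℤ) : ℂ)) / lam =
        -(α 0 - k / lam) := by
      rw [vecMul_M_0, vecMul_M_1, vecMul_M_2]; push_cast; have h0 : ω - ω ^ 2 ≠ 0 := by simpa [lam] using hlam0
      field_simp [hlam0]; simp only [lam]
      linear_combination (α 0 * (ω ^ 2 - 3 * ω + 3) + α 1 + α 2) * hωsum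
    rw [e]; exact isO_neg (h1 0)
  refine ⟨fun i => ?_, csum⟩
  fin_cases i
  · exact c0
  · exact c1
  · exact c2


/-- Right multiplication by `M` maps `Λ_{j,k}` onto `Λ_{-k,j}`. -/
theorem LamSet_mul_M (j k : ℤ) :
    (fun α => Matrix.vecMul α M) '' LamSet j k = LamSet (-k) j := by
  ext β
  constructor
  · rintro ⟨α, hα, rfl⟩
    exact key hα
  · intro hβ
    obtain ⟨hb1, hb2⟩ := hβ
    set γ : Fin 3 → ℂ := ![-β 0, -β 2, -β 1] with hγdef
    have hγ : γ ∈ LamSet k (-j) := by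
      have c0 : isO (γ 0 - ((-j : ℤ) : ℂ) / lam) := by
        have e : γ 0 - ((-j : ℤ) : ℂ) / lam = -(β 0 - (j : ℂ) / lam) := by
          simp [hγdef]; ring
        rw [e]; exact isO_neg (hb1 0)
      have c1 : isO (γ 1 - ((-j : ℤ) : ℂ) / lam) := by
        have e : γ 1 - ((-j : ℤ) : ℂ) / lam = -(β 2 - (j : ℂ) / lam) := by
          simp [hγdef]; ring
        rw [e]; exact isO_neg (hb1 2)
      have c2 : isO (γ 2 - ((-j : ℤ) : ℂ) / lam) := by
        have e : γ 2 - ((-j : ℤ) : ℂ) / lam = -(β 1 - (j : ℂ) / lam) := by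
          simp [hγdef]; ring
        rw [e]; exact isO_neg (hb1 1)
      refine ⟨fun i => ?_, ?_⟩
      · fin_cases i
        · exact c0
        · exact c1
        · exact c2
      · have e : (γ 0 + γ 1 + γ 2 - ((k : ℤ) : ℂ)) / lam =
            -((β 0 + β 1 + β 2 - ((-k : ℤ) : ℂ)) / lam) := by
          simp [hγdef]; ring
        rw [e]; exact isO_neg hb2
    refine ⟨Matrix.vecMul γ M, by simpa using key hγ, ?_⟩
    have h0 : ω - ω ^ 2 ≠ 0 := by simpa [lam] using hlam0
    funext i
    fin_cases i
    · show Matrix.vecMul (Matrix.vecMul γ M) M 0 = β 0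
      rw [vecMul_M_0, vecMul_M_0, vecMul_M_1, vecMul_M_2]
      simp [hγdef]; field_simp [hlam0]; simp only [lam]
      linear_combination (-(β 0 * (ω ^ 2 - 3 * ω + 3) + β 1 + β 2)) * hωsum
    · show Matrix.vecMul (Matrix.vecMul γ M) M 1 = β 1
      rw [vecMul_M_1, vecMul_M_0, vecMul_M_1, vecMul_M_2]
      simp [hγdef]; field_simp [hlam0]; simp only [lam]
      linear_combination (-β 0 - (β 1 + β 2) * (ω ^ 2 - ω + 1)) * hωsum
    · show Matrix.vecMul (Matrix.vecMul γ M) M 2 = β 2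
      rw [vecMul_M_2, vecMul_M_0, vecMul_M_1, vecMul_M_2]
      simp [hγdef]; field_simp [hlam0]; simp only [lam]
      linear_combination (-β 0 - (β 1 + β 2) * (ω ^ 2 - ω + 1)) * hωsum
end
end

section
/- For 0 < q < 1: a(q)·a(q²) = b(q)·b(q²) + c(q)·c(q²), where a(q) = Σ_{m,n∈Z} q^{m²+mn+n²}, b(q) = Σ_{m,n∈Z} ω^{m−n} q^{m²+mn+n²}, c(q) = Σ_{m,n∈Z} q^{(m+1/3)²+(m+1/3)(n+1/3)+(n+1/3)²}. -/
noncomputable section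
open Complex

/-- `a(q) = Σ_{m,n∈ℤ} q^{m²+mn+n²}`. -/
def aq (q : ℝ) : ℂ :=
  ∑' p : ℤ × ℤ,
    (q : ℂ) ^ (((p.1 : ℝ) ^ 2 + (p.1 : ℝ) * (p.2 : ℝ) + (p.2 : ℝ) ^ 2 : ℝ) : ℂ)

/-- `b(q) = Σ_{m,n∈ℤ} ω^{m-n} q^{m²+mn+n²}`. -/
def bq (q : ℝ) : ℂ :=
  ∑' p : ℤ × ℤ,
    ω ^ (p.1 - p.2) *
      (q : ℂ) ^ (((p.1 : ℝ) ^ 2 + (p.1 : ℝ) * (p.2 : ℝ) + (p.2 : ℝ) ^ 2 : ℝ) : ℂ)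

/-- `c(q) = Σ_{m,n∈ℤ} q^{(m+1/3)²+(m+1/3)(n+1/3)+(n+1/3)²}`. -/
def cq (q : ℝ) : ℂ :=
  ∑' p : ℤ × ℤ,
    (q : ℂ) ^ ((((p.1 : ℝ) + 1 / 3) ^ 2 + ((p.1 : ℝ) + 1 / 3) * ((p.2 : ℝ) + 1 / 3)
      + ((p.2 : ℝ) + 1 / 3) ^ 2 : ℝ) : ℂ)

namespace BorAux

/-! ### Facts about ω -/

lemma omega_ne_zero : ω ≠ 0 := Complex.exp_ne_zero _

lemma omega_norm : ‖ω‖ = 1 := by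
  have : (2 * (Real.pi:ℂ) * Complex.I / 3) = ((2 * Real.pi / 3 : ℝ) : ℂ) * Complex.I := by
    push_cast; ring
  rw [ω, this, Complex.norm_exp_ofReal_mul_I]

lemma omega_pow_three : ω ^ (3 : ℕ) = 1 := by
  rw [ω, ← Complex.exp_nat_mul]
  rw [show (3:ℕ) * (2 * (Real.pi:ℂ) * Complex.I / 3) = 2 * Real.pi * Complex.I by ring]
  exact Complex.exp_two_pi_mul_I

lemma omega_ne_one : ω ≠ 1 := by
  intro h
  rw [ω, Complex.exp_eq_one_iff] at h
  obtain ⟨n, hn⟩ := h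
  have h2 : (2:ℂ) * Real.pi * Complex.I ≠ 0 := by
    simp [Real.pi_ne_zero, Complex.I_ne_zero]
  have key : ((1:ℤ):ℂ) * (2 * Real.pi * Complex.I) = ((n*3 : ℤ):ℂ) * (2 * Real.pi * Complex.I) := by
    push_cast
    linear_combination 3 * hn
  have h1 : ((1:ℤ):ℂ) = ((n*3 : ℤ):ℂ) := mul_right_cancel₀ h2 key
  have h3 : (1:ℤ) = n * 3 := by exact_mod_cast h1
  omega

lemma omega_quad : ω ^ 2 + ω + 1 = 0 := by
  have h3 : (ω - 1) * (ω ^ 2 + ω + 1) = 0 := by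
    have := omega_pow_three
    linear_combination this
  rcases mul_eq_zero.mp h3 with h | h
  · exact absurd (by linear_combination h : ω = 1) omega_ne_one
  · exact h

lemma omega_zpow_dvd (k : ℤ) (j : ℕ) (h : (3:ℤ) ∣ (k - j)) : ω ^ k = ω ^ (j:ℕ) := by
  obtain ⟨t, ht⟩ := h
  have hk : k = 3 * t + j := by omega
  rw [hk, zpow_add₀ omega_ne_zero, zpow_mul, show ((3:ℤ)) = ((3:ℕ):ℤ) by norm_num,
    zpow_natCast, omega_pow_three, one_zpow, one_mul, zpow_natCast]

/-! ### Integer-lattice definitions -/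

abbrev P2 := ℤ × ℤ
abbrev VV := P2 × P2

def Qi (p : P2) : ℤ := p.1^2 + p.1*p.2 + p.2^2
def LL (v : VV) : ℤ := v.1.1 - v.1.2 + v.2.1 - v.2.2
def lI (v : VV) : ℤ := v.1.1 + v.1.2 + 2*v.2.1 + 2*v.2.2
def eI (v : VV) : ℤ := Qi v.1 + 2 * Qi v.2

def rot (p : P2) : P2 := (-p.1 - p.2, p.1)
def rotZ (p : ZMod 3 × ZMod 3) : ZMod 3 × ZMod 3 := (-p.1 - p.2, p.1)
def redZ (p : P2) : ZMod 3 × ZMod 3 := ((p.1 : ZMod 3), (p.2 : ZMod 3))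
def chz (p : P2) : ZMod 3 := (p.1 : ZMod 3) - (p.2 : ZMod 3)
def Lz (v : VV) : ZMod 3 := ((LL v : ℤ) : ZMod 3)
def Xe (p : P2) : P2 := (2*p.1 + p.2 + 1, p.2 - p.1)
def Ye (p : P2) : P2 := ((p.1 - p.2 - 1)/3, (p.1 + 2*p.2 - 1)/3)

lemma three_zmod : (3 : ZMod 3) = 0 := by decide

lemma redZ_rot (p : P2) : redZ (rot p) = rotZ (redZ p) := by
  obtain ⟨a, b⟩ := p
  simp only [redZ, rot, rotZ]
  rw [Prod.mk.injEq]
  exact ⟨by push_cast; ring, rfl⟩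

lemma redZ_rot_iter (j : ℕ) (p : P2) : redZ (rot^[j] p) = rotZ^[j] (redZ p) := by
  induction j generalizing p with
  | zero => rfl
  | succ n ih =>
    rw [Function.iterate_succ_apply, Function.iterate_succ_apply, ih (rot p), redZ_rot]

lemma Qi_rot (p : P2) : Qi (rot p) = Qi p := by simp only [Qi, rot]; ring

lemma Qi_rot_iter (j : ℕ) (p : P2) : Qi (rot^[j] p) = Qi p := by
  induction j generalizing p with
  | zero => rfl
  | succ n ih => rw [Function.iterate_succ_apply, ih, Qi_rot]

lemma rot_three (p : P2) : rot^[3] p = p := by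
  obtain ⟨a, b⟩ := p
  show rot (rot (rot (a, b))) = (a, b)
  simp only [rot]
  rw [Prod.mk.injEq]
  constructor <;> ring

lemma rot_inj : Function.Injective rot := by
  intro a b h
  simp only [rot, Prod.mk.injEq] at h
  obtain ⟨h1, h2⟩ := h
  exact Prod.ext h2 (by omega)

lemma Ye_Xe (p : P2) : Ye (Xe p) = p := by
  obtain ⟨a, b⟩ := p
  simp only [Ye, Xe]
  rw [Prod.mk.injEq]
  constructor <;> omega

lemma chz_dvd {p : P2} (h : chz p = 1) : (3:ℤ) ∣ (p.1 - p.2 - 1) := by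
  have : ((p.1 - p.2 - 1 : ℤ) : ZMod 3) = 0 := by
    push_cast
    rw [show ((p.1 : ZMod 3) - p.2 - 1) = chz p - 1 from by rw [chz], h]
    ring
  exact_mod_cast (ZMod.intCast_zmod_eq_zero_iff_dvd _ 3).mp this

lemma Xe_Ye {p : P2} (h : chz p = 1) : Xe (Ye p) = p := by
  have hd := chz_dvd h
  obtain ⟨a, b⟩ := p
  simp only at hd
  simp only [Xe, Ye]
  rw [Prod.mk.injEq]
  constructor <;> omega

lemma Qi_Xe (p : P2) : Qi (Xe p) = 3*Qi p + 3*(p.1 + p.2) + 1 := by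
  simp only [Qi, Xe]; ring

lemma key_form (z w : P2) :
    Qi (z.1 - 2*w.1, z.2 - 2*w.2) + 2 * Qi (z.1 + w.1, z.2 + w.2) = 3*(Qi z + 2*Qi w) := by
  simp only [Qi]; ring

lemma chz_Xe (p : P2) : chz (Xe p) = 1 := by
  simp only [chz, Xe]
  push_cast
  linear_combination (p.1 : ZMod 3) * three_zmod

lemma chz_rotZ (P : ZMod 3 × ZMod 3) : (rotZ P).1 - (rotZ P).2 = P.1 - P.2 := by
  simp only [rotZ]
  linear_combination (-P.1) * three_zmod

lemma chz_redZ (p : P2) : chz p = (redZ p).1 - (redZ p).2 := rfl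

lemma chz_rot_iter (j : ℕ) (p : P2) : chz (rot^[j] p) = chz p := by
  induction j generalizing p with
  | zero => rfl
  | succ n ih => rw [Function.iterate_succ_apply, ih, chz_redZ, redZ_rot, chz_rotZ, ← chz_redZ]

lemma decide_unique : ∀ p : ZMod 3 × ZMod 3, p.1 - p.2 = 1 →
    ∀ j k : Fin 3, rotZ^[j.val] p = rotZ^[k.val] p → j = k := by decide

lemma decide_exists : ∀ p r : ZMod 3 × ZMod 3, p.1 - p.2 = 1 → r.1 - r.2 = 1 →
    ∃ j : Fin 3, rotZ^[j.val] p = r := by decide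

lemma Lz_eq (z w : P2) : Lz (z, w) = chz z + chz w := by
  simp only [Lz, LL, chz]
  push_cast
  ring

lemma redZ_eq_iff (a b : P2) : redZ a = redZ b ↔ ((3:ℤ) ∣ (b.1 - a.1) ∧ (3:ℤ) ∣ (b.2 - a.2)) := by
  simp only [redZ, Prod.mk.injEq]
  constructor
  · rintro ⟨h1, h2⟩
    constructor
    · have : ((b.1 - a.1 : ℤ) : ZMod 3) = 0 := by push_cast; rw [← h1]; ring
      exact_mod_cast (ZMod.intCast_zmod_eq_zero_iff_dvd _ 3).mp this
    · have : ((b.2 - a.2 : ℤ) : ZMod 3) = 0 := by push_cast; rw [← h2]; ring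
      exact_mod_cast (ZMod.intCast_zmod_eq_zero_iff_dvd _ 3).mp this
  · rintro ⟨h1, h2⟩
    have e1 : ((b.1 - a.1 : ℤ) : ZMod 3) = 0 := by
      exact_mod_cast (ZMod.intCast_zmod_eq_zero_iff_dvd _ 3).mpr (by exact_mod_cast h1)
    have e2 : ((b.2 - a.2 : ℤ) : ZMod 3) = 0 := by
      exact_mod_cast (ZMod.intCast_zmod_eq_zero_iff_dvd _ 3).mpr (by exact_mod_cast h2)
    push_cast at e1 e2
    constructor
    · linear_combination -e1
    · linear_combination -e2

/-! ### The 3-to-1 correspondence -/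

def T1 : Set VV := Lz ⁻¹' {1}

def Phi (x : Fin 3 × T1) : VV :=
  (Ye (rot^[x.1.val] (x.2.val.1.1 - 2*x.2.val.2.1, x.2.val.1.2 - 2*x.2.val.2.2)),
   Ye (x.2.val.1.1 + x.2.val.2.1, x.2.val.1.2 + x.2.val.2.2))

lemma mem_T1 {v : VV} : v ∈ T1 ↔ Lz v = 1 := Iff.rfl

lemma chz_sub2 {z w : P2} (h : Lz (z, w) = 1) :
    chz (z.1 - 2*w.1, z.2 - 2*w.2) = 1 := by
  rw [Lz_eq] at h
  simp only [chz] at h ⊢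
  push_cast
  linear_combination h + ((w.2 : ZMod 3) - (w.1 : ZMod 3)) * three_zmod

lemma chz_add2 {z w : P2} (h : Lz (z, w) = 1) :
    chz (z.1 + w.1, z.2 + w.2) = 1 := by
  rw [Lz_eq] at h
  simp only [chz] at h ⊢
  push_cast
  linear_combination h

lemma redZ_sub2_eq_add2 (z w : P2) :
    redZ (z.1 - 2*w.1, z.2 - 2*w.2) = redZ (z.1 + w.1, z.2 + w.2) := by
  rw [redZ_eq_iff]
  constructor
  · exact ⟨w.1, by ring⟩
  · exact ⟨w.2, by ring⟩

lemma Phi_inj : Function.Injective Phi := by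
  rintro ⟨j, ⟨⟨z, w⟩, hv⟩⟩ ⟨k, ⟨⟨z', w'⟩, hv'⟩⟩ h
  rw [mem_T1] at hv hv'
  simp only [Phi, Prod.mk.injEq] at h
  obtain ⟨h1, h2⟩ := h
  set u := rot^[j.val] (z.1 - 2*w.1, z.2 - 2*w.2) with hu
  set u' := rot^[k.val] (z'.1 - 2*w'.1, z'.2 - 2*w'.2) with hu'
  have cu : chz u = 1 := by rw [hu, chz_rot_iter]; exact chz_sub2 hv
  have cu' : chz u' = 1 := by rw [hu', chz_rot_iter]; exact chz_sub2 hv'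
  have cy : chz (z.1 + w.1, z.2 + w.2) = 1 := chz_add2 hv
  have cy' : chz (z'.1 + w'.1, z'.2 + w'.2) = 1 := chz_add2 hv'
  have huu : u = u' := by rw [← Xe_Ye cu, ← Xe_Ye cu', h1]
  have hyy : (z.1 + w.1, z.2 + w.2) = (z'.1 + w'.1, z'.2 + w'.2) := by
    rw [← Xe_Ye cy, ← Xe_Ye cy', h2]
  have hredu : redZ u = rotZ^[j.val] (redZ (z.1 + w.1, z.2 + w.2)) := by
    rw [hu, redZ_rot_iter, redZ_sub2_eq_add2]
  have hredu' : redZ u' = rotZ^[k.val] (redZ (z'.1 + w'.1, z'.2 + w'.2)) := by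
    rw [hu', redZ_rot_iter, redZ_sub2_eq_add2]
  have hjk : j = k := by
    apply decide_unique (redZ (z.1 + w.1, z.2 + w.2)) (by rw [← chz_redZ]; exact cy)
    rw [← hredu, huu, hredu', ← hyy]
  subst hjk
  have hsub : (z.1 - 2*w.1, z.2 - 2*w.2) = (z'.1 - 2*w'.1, z'.2 - 2*w'.2) := by
    have : Function.Injective (rot^[j.val]) := Function.Injective.iterate rot_inj j.val
    exact this (by rw [← hu, ← hu', huu])
  rw [Prod.mk.injEq] at hsub hyy
  have hz1 : z.1 = z'.1 := by omega
  have hz2 : z.2 = z'.2 := by omega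
  have hw1 : w.1 = w'.1 := by omega
  have hw2 : w.2 = w'.2 := by omega
  refine Prod.ext rfl ?_
  apply Subtype.ext
  simp only
  rw [Prod.mk.injEq]
  exact ⟨Prod.ext hz1 hz2, Prod.ext hw1 hw2⟩

lemma Phi_surj : Function.Surjective Phi := by
  rintro ⟨p₁, p₂⟩
  obtain ⟨x, hx⟩ : ∃ x : P2, x = Xe p₁ := ⟨_, rfl⟩
  obtain ⟨y, hy⟩ : ∃ y : P2, y = Xe p₂ := ⟨_, rfl⟩
  have cx : chz x = 1 := by rw [hx]; exact chz_Xe p₁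
  have cy : chz y = 1 := by rw [hy]; exact chz_Xe p₂
  obtain ⟨k, hk⟩ := decide_exists (redZ x) (redZ y) (by rw [← chz_redZ]; exact cx)
    (by rw [← chz_redZ]; exact cy)
  obtain ⟨u, hu⟩ : ∃ u : P2, u = rot^[k.val] x := ⟨_, rfl⟩
  have hred : redZ u = redZ y := by rw [hu, redZ_rot_iter, hk]
  rw [redZ_eq_iff] at hred
  obtain ⟨⟨t1, ht1⟩, ⟨t2, ht2⟩⟩ := hred
  refine ⟨⟨⟨(3 - k.val) % 3, by omega⟩, ⟨((y.1 - t1, y.2 - t2), (t1, t2)), ?_⟩⟩, ?_⟩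
  · rw [mem_T1, Lz_eq]
    have : chz (y.1 - t1, y.2 - t2) + chz (t1, t2) = chz y := by
      simp only [chz]; push_cast; ring
    rw [this]
    exact cy
  · simp only [Phi]
    have e1 : ((y.1 - t1) - 2*t1, (y.2 - t2) - 2*t2) = u := by
      rw [Prod.mk.injEq]; constructor <;> omega
    have e2 : ((y.1 - t1) + t1, (y.2 - t2) + t2) = y := by
      rw [Prod.mk.injEq]; constructor <;> omega
    simp only [e1, e2]
    have e3 : rot^[(3 - k.val) % 3] u = x := by
      rw [hu, ← Function.iterate_add_apply]
      have hk3 : k.val < 3 := k.isLt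
      interval_cases h : k.val
      · simp
      · rw [show (3 - 1) % 3 + 1 = 3 from rfl]; exact rot_three x
      · rw [show (3 - 2) % 3 + 2 = 3 from rfl]; exact rot_three x
    rw [e3, hx, hy, Ye_Xe, Ye_Xe]

lemma Phi_exp (x : Fin 3 × T1) : eI (Phi x) + lI (Phi x) + 1 = eI x.2.val := by
  obtain ⟨j, ⟨⟨z, w⟩, hv⟩⟩ := x
  have hv1 : Lz (z, w) = 1 := hv
  obtain ⟨u, hu⟩ : ∃ u : P2, u = rot^[j.val] (z.1 - 2*w.1, z.2 - 2*w.2) := ⟨_, rfl⟩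
  have cu : chz u = 1 := by rw [hu, chz_rot_iter]; exact chz_sub2 hv1
  have cy : chz (z.1 + w.1, z.2 + w.2) = 1 := chz_add2 hv1
  have key : 3 * (eI (Phi (j, ⟨(z, w), hv⟩)) + lI (Phi (j, ⟨(z, w), hv⟩)) + 1)
      = 3 * eI ((z, w) : VV) := by
    have hA : Qi (Xe (Ye u)) = Qi u := by rw [Xe_Ye cu]
    have hB : Qi (Xe (Ye (z.1 + w.1, z.2 + w.2))) = Qi (z.1 + w.1, z.2 + w.2) := by
      rw [Xe_Ye cy]
    rw [Qi_Xe] at hA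
    rw [Qi_Xe] at hB
    have hQu : Qi u = Qi (z.1 - 2*w.1, z.2 - 2*w.2) := by rw [hu, Qi_rot_iter]
    have hkey := key_form z w
    simp only [Phi, eI, lI]
    rw [← hu]
    rw [hQu] at hA
    linarith [hA, hB, hkey]
  show eI (Phi (j, ⟨(z, w), hv⟩)) + lI (Phi (j, ⟨(z, w), hv⟩)) + 1 = eI ((z, w) : VV)
  omega

/-! ### The swap involution -/

def sw (v : VV) : VV := ((v.1.2, v.1.1), (v.2.2, v.2.1))

lemma sw_sw (v : VV) : sw (sw v) = v := by
  obtain ⟨⟨a, b⟩, ⟨c, d⟩⟩ := v; rfl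

lemma LL_sw (v : VV) : LL (sw v) = - LL v := by simp only [LL, sw]; ring

lemma eI_sw (v : VV) : eI (sw v) = eI v := by simp only [eI, Qi, sw]; ring

lemma Lz_sw (v : VV) : Lz (sw v) = - Lz v := by
  simp only [Lz, LL_sw]
  push_cast
  ring

def swEquiv : ↥(Lz ⁻¹' ({2} : Set (ZMod 3))) ≃ ↥(Lz ⁻¹' ({1} : Set (ZMod 3))) where
  toFun v := ⟨sw v.val, by
    have hv : Lz v.val = 2 := v.2
    show Lz (sw v.val) = 1
    rw [Lz_sw, hv]; decide⟩
  invFun v := ⟨sw v.val, by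
    have hv : Lz v.val = 1 := v.2
    show Lz (sw v.val) = 2
    rw [Lz_sw, hv]; decide⟩
  left_inv v := Subtype.ext (sw_sw v.val)
  right_inv v := Subtype.ext (sw_sw v.val)

/-! ### Summability -/

lemma int_le_sq (k : ℤ) (hk : 0 ≤ k) : k ≤ k^2 := by nlinarith

lemma summable_aux {q : ℝ} (hq0 : 0 < q) (hq1 : q < 1) (f : P2 → ℝ)
    (hf : ∀ p : P2, ((p.1.natAbs : ℝ) + (p.2.natAbs : ℝ)) / 6 - 1 ≤ f p) :
    Summable fun p : P2 => q ^ f p := by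
  set r : ℝ := q ^ (6⁻¹ : ℝ) with hr
  have hr0 : 0 < r := Real.rpow_pos_of_pos hq0 _
  have hr1 : r < 1 := Real.rpow_lt_one hq0.le hq1 (by norm_num)
  have hN : Summable fun n : ℕ => r ^ n := summable_geometric_of_lt_one hr0.le hr1
  have hZ : Summable fun n : ℤ => r ^ n.natAbs := by
    apply Summable.of_nat_of_neg
    · simpa using hN
    · simpa using hN
  have hprod : Summable fun p : P2 => q⁻¹ * (r ^ p.1.natAbs * r ^ p.2.natAbs) :=
    (hZ.mul_of_nonneg hZ (fun _ => by positivity) (fun _ => by positivity)).mul_left _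
  apply Summable.of_nonneg_of_le (fun p => (Real.rpow_pos_of_pos hq0 _).le) _ hprod
  intro p
  have h1 : q ^ f p ≤ q ^ (((p.1.natAbs : ℝ) + (p.2.natAbs : ℝ)) / 6 - 1) :=
    Real.rpow_le_rpow_of_exponent_ge hq0 hq1.le (hf p)
  refine h1.trans_eq ?_
  rw [Real.rpow_sub hq0, Real.rpow_one, div_eq_mul_inv _ q, mul_comm _ q⁻¹]
  congr 1
  rw [show ((p.1.natAbs : ℝ) + (p.2.natAbs : ℝ)) / 6 = (((p.1.natAbs + p.2.natAbs : ℕ)):ℝ) * 6⁻¹ by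
    push_cast; ring]
  rw [mul_comm, Real.rpow_mul hq0.le, Real.rpow_natCast, pow_add]

lemma sA {q : ℝ} (hq0 : 0 < q) (hq1 : q < 1) :
    Summable fun p : P2 => q ^ ((Qi p : ℝ)) := by
  apply summable_aux hq0 hq1
  intro p
  rcases p with ⟨m, n⟩
  have h1 : (m.natAbs : ℤ) + (n.natAbs : ℤ) ≤ 6 * Qi (m, n) + 6 := by
    have hm : (m.natAbs : ℤ) = |m| := Int.abs_eq_natAbs m |>.symm
    have hn : (n.natAbs : ℤ) = |n| := Int.abs_eq_natAbs n |>.symm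
    rw [hm, hn]
    have h2 : |m| ≤ m^2 := by
      have := int_le_sq |m| (abs_nonneg m); simpa [sq_abs] using this
    have h3 : |n| ≤ n^2 := by
      have := int_le_sq |n| (abs_nonneg n); simpa [sq_abs] using this
    have h4 : 0 ≤ (m+n)^2 := sq_nonneg _
    simp only [Qi]
    nlinarith
  have h5 : |(m:ℝ)| + |(n:ℝ)| ≤ 6 * (Qi (m,n) : ℝ) + 6 := by
    have := (@Int.cast_le ℝ _ _ _).mpr h1
    push_cast [Nat.cast_natAbs] at this
    linarith
  simp only [Nat.cast_natAbs, Int.cast_ofNat]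
  push_cast
  linarith

lemma sC {q : ℝ} (hq0 : 0 < q) (hq1 : q < 1) :
    Summable fun p : P2 => q ^ (((Qi p + p.1 + p.2 : ℤ) : ℝ) + 1/3) := by
  apply summable_aux hq0 hq1
  intro p
  rcases p with ⟨m, n⟩
  have h1 : (m.natAbs : ℤ) + (n.natAbs : ℤ) ≤ 6 * (Qi (m, n) + m + n) + 6 := by
    have hm : (m.natAbs : ℤ) = |m| := Int.abs_eq_natAbs m |>.symm
    have hn : (n.natAbs : ℤ) = |n| := Int.abs_eq_natAbs n |>.symm
    rw [hm, hn]
    have h2 : |m| ≤ m^2 := by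
      have := int_le_sq |m| (abs_nonneg m); simpa [sq_abs] using this
    have h3 : |n| ≤ n^2 := by
      have := int_le_sq |n| (abs_nonneg n); simpa [sq_abs] using this
    have h4 : 0 ≤ (m+n+1)^2 := sq_nonneg _
    simp only [Qi]
    nlinarith
  have h5 : |(m:ℝ)| + |(n:ℝ)| ≤ 6 * ((Qi (m,n) : ℝ) + m + n) + 6 := by
    have := (@Int.cast_le ℝ _ _ _).mpr h1
    push_cast [Nat.cast_natAbs] at this
    linarith
  simp only [Nat.cast_natAbs, Int.cast_ofNat]
  push_cast
  linarith

variable {q : ℝ}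

lemma rpow_sq (hq0 : 0 < q) (y : ℝ) : (q^2 : ℝ) ^ (y : ℝ) = q ^ (2*y) := by
  rw [← Real.rpow_natCast q 2, ← Real.rpow_mul hq0.le]
  norm_num

lemma sAA (hq0 : 0 < q) (sA1 : Summable fun p : P2 => q ^ ((Qi p : ℝ)))
    (sA2 : Summable fun p : P2 => (q^2) ^ ((Qi p : ℝ))) :
    Summable fun v : VV => q ^ ((eI v : ℝ)) := by
  have h := sA1.mul_of_nonneg sA2 (fun _ => (Real.rpow_pos_of_pos hq0 _).le)
    (fun _ => (Real.rpow_pos_of_pos (by positivity) _).le)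
  apply h.congr
  intro v
  rw [rpow_sq hq0, ← Real.rpow_add hq0]
  congr 1
  push_cast [eI]
  ring

lemma sCC (hq0 : 0 < q)
    (sC1 : Summable fun p : P2 => q ^ (((Qi p + p.1 + p.2 : ℤ) : ℝ) + 1/3))
    (sC2 : Summable fun p : P2 => (q^2) ^ (((Qi p + p.1 + p.2 : ℤ) : ℝ) + 1/3)) :
    Summable fun v : VV => q ^ ((eI v : ℝ) + (lI v : ℝ) + 1) := by
  have h := sC1.mul_of_nonneg sC2 (fun _ => (Real.rpow_pos_of_pos hq0 _).le)
    (fun _ => (Real.rpow_pos_of_pos (by positivity) _).le)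
  apply h.congr
  intro v
  rw [rpow_sq hq0, ← Real.rpow_add hq0]
  congr 1
  push_cast [eI, lI]
  ring

/-! ### Rewriting the three series -/

lemma aq_eq (hq0 : 0 < q) : aq q = ∑' p : P2, ((q ^ ((Qi p : ℝ)) : ℝ) : ℂ) := by
  rw [aq]
  apply tsum_congr
  intro p
  rw [Complex.ofReal_cpow hq0.le]
  congr 1
  push_cast [Qi]
  ring

lemma bq_eq (hq0 : 0 < q) :
    bq q = ∑' p : P2, ω ^ (p.1 - p.2) * ((q ^ ((Qi p : ℝ)) : ℝ) : ℂ) := by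
  rw [bq]
  apply tsum_congr
  intro p
  congr 1
  rw [Complex.ofReal_cpow hq0.le]
  congr 1
  push_cast [Qi]
  ring

lemma cq_eq (hq0 : 0 < q) :
    cq q = ∑' p : P2, ((q ^ (((Qi p + p.1 + p.2 : ℤ) : ℝ) + 1/3) : ℝ) : ℂ) := by
  rw [cq]
  apply tsum_congr
  intro p
  rw [Complex.ofReal_cpow hq0.le]
  congr 1
  push_cast [Qi]
  ring

end BorAux

open BorAux in
/-- `a(q)a(q²) = b(q)b(q²) + c(q)c(q²)`. -/
theorem borwein_mul (q : ℝ) (hq0 : 0 < q) (hq1 : q < 1) :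
    aq q * aq (q ^ 2) = bq q * bq (q ^ 2) + cq q * cq (q ^ 2) := by
  classical
  have hq0' : 0 < q^2 := by positivity
  have hq1' : q^2 < 1 := by nlinarith
  -- real summability
  have sa1 := sA hq0 hq1
  have sa2 := sA hq0' hq1'
  have sc1 := sC hq0 hq1
  have sc2 := sC hq0' hq1'
  have saa := sAA hq0 sa1 sa2
  have scc := sCC hq0 sc1 sc2
  -- the three grand functions on VV
  set fA : VV → ℂ := fun v => ((q ^ ((eI v : ℝ)) : ℝ) : ℂ) with hfA
  set fB : VV → ℂ := fun v => ω ^ (LL v) * ((q ^ ((eI v : ℝ)) : ℝ) : ℂ) with hfB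
  set fC : VV → ℂ := fun v => ((q ^ ((eI v : ℝ) + (lI v : ℝ) + 1) : ℝ) : ℂ) with hfC
  have SAc : Summable fA := Complex.summable_ofReal.mpr saa
  have SBc : Summable fB := by
    apply Summable.of_norm
    apply saa.congr
    intro v
    rw [hfB]
    rw [norm_mul, norm_zpow, omega_norm, one_zpow, one_mul, Complex.norm_real,
      Real.norm_eq_abs, _root_.abs_of_nonneg (Real.rpow_nonneg hq0.le _)]
  have SCc : Summable fC := Complex.summable_ofReal.mpr scc
  -- norm-summability of the individual factors
  have na1 : Summable fun p : P2 => ‖((q ^ ((Qi p : ℝ)) : ℝ) : ℂ)‖ := by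
    apply sa1.congr
    intro p
    rw [Complex.norm_real, Real.norm_eq_abs, _root_.abs_of_nonneg (Real.rpow_nonneg hq0.le _)]
  have na2 : Summable fun p : P2 => ‖(((q^2) ^ ((Qi p : ℝ)) : ℝ) : ℂ)‖ := by
    apply sa2.congr
    intro p
    rw [Complex.norm_real, Real.norm_eq_abs, _root_.abs_of_nonneg (Real.rpow_nonneg hq0'.le _)]
  have nb1 : Summable fun p : P2 => ‖ω ^ (p.1 - p.2) * ((q ^ ((Qi p : ℝ)) : ℝ) : ℂ)‖ := by
    apply sa1.congr
    intro p
    rw [norm_mul, norm_zpow, omega_norm, one_zpow, one_mul, Complex.norm_real,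
      Real.norm_eq_abs, _root_.abs_of_nonneg (Real.rpow_nonneg hq0.le _)]
  have nb2 : Summable fun p : P2 => ‖ω ^ (p.1 - p.2) * (((q^2) ^ ((Qi p : ℝ)) : ℝ) : ℂ)‖ := by
    apply sa2.congr
    intro p
    rw [norm_mul, norm_zpow, omega_norm, one_zpow, one_mul, Complex.norm_real,
      Real.norm_eq_abs, _root_.abs_of_nonneg (Real.rpow_nonneg hq0'.le _)]
  have nc1 : Summable fun p : P2 =>
      ‖((q ^ (((Qi p + p.1 + p.2 : ℤ) : ℝ) + 1/3) : ℝ) : ℂ)‖ := by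
    apply sc1.congr
    intro p
    rw [Complex.norm_real, Real.norm_eq_abs, _root_.abs_of_nonneg (Real.rpow_nonneg hq0.le _)]
  have nc2 : Summable fun p : P2 =>
      ‖(((q^2) ^ (((Qi p + p.1 + p.2 : ℤ) : ℝ) + 1/3) : ℝ) : ℂ)‖ := by
    apply sc2.congr
    intro p
    rw [Complex.norm_real, Real.norm_eq_abs, _root_.abs_of_nonneg (Real.rpow_nonneg hq0'.le _)]
  -- the three products as sums over VV
  have hA : aq q * aq (q^2) = ∑' v : VV, fA v := by
    rw [aq_eq hq0, aq_eq hq0', tsum_mul_tsum_of_summable_norm na1 na2]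
    apply tsum_congr
    intro v
    rw [hfA, ← Complex.ofReal_mul]
    congr 1
    rw [rpow_sq hq0, ← Real.rpow_add hq0]
    congr 1
    push_cast [eI]
    ring
  have hB : bq q * bq (q^2) = ∑' v : VV, fB v := by
    rw [bq_eq hq0, bq_eq hq0', tsum_mul_tsum_of_summable_norm nb1 nb2]
    apply tsum_congr
    intro v
    rw [hfB, mul_mul_mul_comm]
    congr 1
    · rw [← zpow_add₀ omega_ne_zero]
      congr 1
      simp only [LL]
      ring
    · rw [← Complex.ofReal_mul]
      congr 1
      rw [rpow_sq hq0, ← Real.rpow_add hq0]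
      congr 1
      push_cast [eI]
      ring
  have hC : cq q * cq (q^2) = ∑' v : VV, fC v := by
    rw [cq_eq hq0, cq_eq hq0', tsum_mul_tsum_of_summable_norm nc1 nc2]
    apply tsum_congr
    intro v
    rw [hfC, ← Complex.ofReal_mul]
    congr 1
    rw [rpow_sq hq0, ← Real.rpow_add hq0]
    congr 1
    push_cast [eI, lI]
    ring
  -- zpow values on the fibers
  have hz0 : ∀ v : VV, Lz v = 0 → ω ^ (LL v) = 1 := by
    intro v hv
    have hd : (3:ℤ) ∣ LL v := by
      exact_mod_cast (ZMod.intCast_zmod_eq_zero_iff_dvd _ 3).mp hv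
    have := omega_zpow_dvd (LL v) 0 (by simpa using hd)
    simpa using this
  have hz1 : ∀ v : VV, Lz v = 1 → ω ^ (LL v) = ω := by
    intro v hv
    have hd : (3:ℤ) ∣ (LL v - 1) := by
      have : ((LL v - 1 : ℤ) : ZMod 3) = 0 := by
        push_cast
        rw [show ((LL v : ZMod 3)) = Lz v from rfl, hv]
        ring
      exact_mod_cast (ZMod.intCast_zmod_eq_zero_iff_dvd _ 3).mp this
    have := omega_zpow_dvd (LL v) 1 (by simpa using hd)
    simpa using this
  have hz2 : ∀ v : VV, Lz v = 2 → ω ^ (LL v) = ω^2 := by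
    intro v hv
    have hd : (3:ℤ) ∣ (LL v - 2) := by
      have : ((LL v - 2 : ℤ) : ZMod 3) = 0 := by
        push_cast
        rw [show ((LL v : ZMod 3)) = Lz v from rfl, hv]
        ring
      exact_mod_cast (ZMod.intCast_zmod_eq_zero_iff_dvd _ 3).mp this
    have := omega_zpow_dvd (LL v) 2 (by simpa using hd)
    simpa using this
  -- the fiber-1 sum
  set S1 : ℂ := ∑' v : ↥(Lz ⁻¹' ({1} : Set (ZMod 3))), fA v.val with hS1
  -- A - B = 3 S1
  have key3 : (∑' v : VV, fA v) - (∑' v : VV, fB v) = 3 * S1 := by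
    rw [← Summable.tsum_sub SAc SBc]
    have hF : Summable (fun v : VV => fA v - fB v) := SAc.sub SBc
    have hfw := (hF.hasSum.tsum_fiberwise Lz).tsum_eq
    rw [← hfw, tsum_fintype]
    rw [show (Finset.univ : Finset (ZMod 3)) = {0, 1, 2} by decide]
    rw [Finset.sum_insert (by decide), Finset.sum_insert (by decide), Finset.sum_singleton]
    have e0 : ∑' v : ↥(Lz ⁻¹' ({0} : Set (ZMod 3))), (fA v.val - fB v.val) = 0 := by
      have : ∀ v : ↥(Lz ⁻¹' ({0} : Set (ZMod 3))), fA v.val - fB v.val = 0 := by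
        intro v
        have hv : Lz v.val = 0 := v.2
        rw [hfA, hfB]
        simp only
        rw [hz0 v.val hv]
        ring
      rw [tsum_congr this, tsum_zero]
    have e1 : ∑' v : ↥(Lz ⁻¹' ({1} : Set (ZMod 3))), (fA v.val - fB v.val)
        = (1 - ω) * S1 := by
      have : ∀ v : ↥(Lz ⁻¹' ({1} : Set (ZMod 3))), fA v.val - fB v.val
          = (1 - ω) * fA v.val := by
        intro v
        have hv : Lz v.val = 1 := v.2
        rw [hfA, hfB]
        simp only
        rw [hz1 v.val hv]
        ring
      rw [tsum_congr this, tsum_mul_left, hS1]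
    have e2 : ∑' v : ↥(Lz ⁻¹' ({2} : Set (ZMod 3))), (fA v.val - fB v.val)
        = (1 - ω^2) * S1 := by
      have h1 : ∀ v : ↥(Lz ⁻¹' ({2} : Set (ZMod 3))), fA v.val - fB v.val
          = (1 - ω^2) * fA v.val := by
        intro v
        have hv : Lz v.val = 2 := v.2
        rw [hfA, hfB]
        simp only
        rw [hz2 v.val hv]
        ring
      rw [tsum_congr h1, tsum_mul_left]
      congr 1
      have h2 : ∀ v : ↥(Lz ⁻¹' ({2} : Set (ZMod 3))), fA v.val = fA (swEquiv v).val := by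
        intro v
        show fA v.val = fA (sw v.val)
        rw [hfA]
        simp only
        rw [eI_sw]
      rw [tsum_congr h2, hS1]
      exact swEquiv.tsum_eq (fun v : ↥(Lz ⁻¹' ({1} : Set (ZMod 3))) => fA v.val)
    rw [e0, e1, e2]
    linear_combination (-S1) * omega_quad
  -- C = 3 S1
  have key4 : (∑' v : VV, fC v) = 3 * S1 := by
    have hbij : Function.Bijective Phi := ⟨Phi_inj, Phi_surj⟩
    rw [← (Equiv.ofBijective Phi hbij).tsum_eq fC]
    have hterm : ∀ x : Fin 3 × ↥T1, fC (Phi x) = fA x.2.val := by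
      intro x
      rw [hfC, hfA]
      simp only
      congr 1
      have h := Phi_exp x
      have h2 : ((eI (Phi x) + lI (Phi x) + 1 : ℤ) : ℝ) = ((eI x.2.val : ℤ) : ℝ) := by
        exact_mod_cast congrArg (fun t : ℤ => (t : ℝ)) h
      push_cast at h2
      rw [show (eI (Phi x) : ℝ) + (lI (Phi x) : ℝ) + 1 = ((eI x.2.val : ℤ) : ℝ) from by
        linarith]
    have heq : ∀ x : Fin 3 × ↥T1, fC ((Equiv.ofBijective Phi hbij) x) = fA x.2.val := hterm
    rw [tsum_congr heq]
    have hsum : Summable (fun x : Fin 3 × ↥T1 => fA x.2.val) := by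
      have h1 : Summable (fC ∘ (Equiv.ofBijective Phi hbij)) :=
        ((Equiv.ofBijective Phi hbij).summable_iff).mpr SCc
      exact h1.congr heq
    rw [Summable.tsum_prod hsum, tsum_fintype]
    have hT : (∑' v : ↥T1, fA v.val) = S1 := rfl
    simp only [hT]
    rw [Finset.sum_const, Finset.card_univ, Fintype.card_fin, nsmul_eq_mul]
    norm_num
  rw [hA, hB, hC, key4]
  linear_combination key3
end
end
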